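/- For 1 < p < 2 there exists a constant C > 0 depending only on p such that for all real numbers t, r: |t - r|^p ≤ C ((|t|^{p-2}t - |r|^{p-2}r)(t - r))^{p/2} (|t|^p + |r|^p)^{(2-p)/2}. -/

import Mathlib

open Real

private lemma stmt4_aux (p : ℝ) (hp1 : 1 < p) (hp2 : p < 2) (t r : ℝ) (hr : r < t)
    (hrt : |r| ≤ t) :
    |t - r| ^ p ≤ (2 / (p - 1)) ^ (p / 2) *
      ((|t| ^ (p - 2) * t - |r| ^ (p - 2) * r) * (t - r)) ^ (p / 2) *
      (|t| ^ p + |r| ^ p) ^ ((2 - p) / 2) := by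
  have hq : (0:ℝ) < p - 1 := by linarith
  have habs := abs_le.mp hrt
  have ht : 0 < t := by linarith [habs.1, habs.2]
  have htp2 : 0 < t ^ (p - 2) := Real.rpow_pos_of_pos ht _
  have htp1 : t ^ (p - 1) = t ^ (p - 2) * t := by
    rw [show p - 1 = (p - 2) + 1 by ring, Real.rpow_add_one ht.ne']
  -- Key pointwise estimate
  have hK : (p - 1) / 2 * t ^ (p - 2) * (t - r) ≤ |t| ^ (p - 2) * t - |r| ^ (p - 2) * r := by
    rw [abs_of_pos ht]
    rcases le_or_gt 0 r with hr0 | hr0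
    · rw [abs_of_nonneg hr0]
      have hrp : r ^ (p - 2) * r = r ^ (p - 1) := by
        rcases eq_or_lt_of_le hr0 with h | h
        · rw [← h, Real.zero_rpow (by linarith : p - 2 ≠ 0),
            Real.zero_rpow (by linarith : p - 1 ≠ 0), zero_mul]
        · rw [show p - 1 = (p - 2) + 1 by ring, Real.rpow_add_one h.ne']
      rw [hrp]
      have hber := Real.geom_mean_le_arith_mean2_weighted (by linarith : (0:ℝ) ≤ p - 1)
        (by linarith : (0:ℝ) ≤ 2 - p) (by positivity : (0:ℝ) ≤ r / t) zero_le_one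
        (by ring)
      rw [Real.one_rpow, mul_one] at hber
      have hdiv : (r / t) ^ (p - 1) = r ^ (p - 1) / t ^ (p - 1) := Real.div_rpow hr0 ht.le _
      rw [hdiv] at hber
      have htp1pos : 0 < t ^ (p - 1) := Real.rpow_pos_of_pos ht _
      have hexp : r ^ (p - 1) ≤ (p - 1) * r * t ^ (p - 2) + (2 - p) * (t ^ (p - 2) * t) := by
        have h2 : r ^ (p - 1) ≤ ((p - 1) * (r / t) + (2 - p) * 1) * t ^ (p - 1) := by
          rw [← div_le_iff₀ htp1pos]; exact hber
        calc r ^ (p - 1) ≤ ((p - 1) * (r / t) + (2 - p) * 1) * t ^ (p - 1) := h2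
          _ = (p - 1) * r * t ^ (p - 2) + (2 - p) * (t ^ (p - 2) * t) := by
              rw [htp1]; field_simp
      nlinarith [mul_pos htp2 (sub_pos.2 hr), hexp]
    · rw [abs_of_neg hr0]
      have h1 : (p - 1) * (t - r) ≤ 2 * t := by nlinarith [sub_pos.2 hr]
      have h2 : (p - 1) / 2 * t ^ (p - 2) * (t - r) ≤ t ^ (p - 2) * t := by
        nlinarith [mul_le_mul_of_nonneg_left h1 htp2.le]
      have hY : 0 ≤ (-r) ^ (p - 2) * (-r) :=
        mul_nonneg (Real.rpow_nonneg (by linarith) _) (by linarith)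
      linarith [h2, hY]
  have hsub : (0:ℝ) < t - r := sub_pos.2 hr
  -- lower bound for D
  have hD : (p - 1) / 2 * t ^ (p - 2) * ((t - r) * (t - r)) ≤
      (|t| ^ (p - 2) * t - |r| ^ (p - 2) * r) * (t - r) := by
    have := mul_le_mul_of_nonneg_right hK hsub.le
    nlinarith [this]
  have hL0 : (0:ℝ) ≤ (p - 1) / 2 * t ^ (p - 2) * ((t - r) * (t - r)) := by positivity
  have hD0 : (0:ℝ) ≤ (|t| ^ (p - 2) * t - |r| ^ (p - 2) * r) * (t - r) := le_trans hL0 hD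
  have hDp : ((p - 1) / 2 * t ^ (p - 2) * ((t - r) * (t - r))) ^ (p / 2) ≤
      ((|t| ^ (p - 2) * t - |r| ^ (p - 2) * r) * (t - r)) ^ (p / 2) :=
    Real.rpow_le_rpow hL0 hD (by linarith)
  have hSp : (t ^ p) ^ ((2 - p) / 2) ≤ (|t| ^ p + |r| ^ p) ^ ((2 - p) / 2) := by
    apply Real.rpow_le_rpow (Real.rpow_nonneg ht.le _) _ (by linarith)
    rw [abs_of_pos ht]
    have : (0:ℝ) ≤ |r| ^ p := Real.rpow_nonneg (abs_nonneg r) _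
    linarith
  -- compute the lower bound exactly
  have hmm : (t - r) * (t - r) = (t - r) ^ (2:ℝ) := by
    rw [show (2:ℝ) = ((2:ℕ):ℝ) by norm_num, Real.rpow_natCast]; ring
  have eqL : ((p - 1) / 2 * t ^ (p - 2) * ((t - r) * (t - r))) ^ (p / 2) =
      ((p - 1) / 2) ^ (p / 2) * t ^ ((p - 2) * (p / 2)) * (t - r) ^ p := by
    rw [hmm, Real.mul_rpow (by positivity) (by positivity),
      Real.mul_rpow (by positivity) (by positivity), ← Real.rpow_mul ht.le,
      ← Real.rpow_mul hsub.le, show (2:ℝ) * (p / 2) = p by ring]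
  have eqT : (t ^ p) ^ ((2 - p) / 2) = t ^ (p * ((2 - p) / 2)) :=
    (Real.rpow_mul ht.le _ _).symm
  have eqC : (2 / (p - 1)) ^ (p / 2) * ((p - 1) / 2) ^ (p / 2) = 1 := by
    rw [← Real.mul_rpow (by positivity) (by positivity),
      show 2 / (p - 1) * ((p - 1) / 2) = 1 by field_simp, Real.one_rpow]
  have eqE : t ^ ((p - 2) * (p / 2)) * t ^ (p * ((2 - p) / 2)) = 1 := by
    rw [← Real.rpow_add ht, show (p - 2) * (p / 2) + p * ((2 - p) / 2) = 0 by ring,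
      Real.rpow_zero]
  have hC : (0:ℝ) < (2 / (p - 1)) ^ (p / 2) := Real.rpow_pos_of_pos (by positivity) _
  have main_eq : (2 / (p - 1)) ^ (p / 2) *
      ((p - 1) / 2 * t ^ (p - 2) * ((t - r) * (t - r))) ^ (p / 2) *
      (t ^ p) ^ ((2 - p) / 2) = (t - r) ^ p := by
    rw [eqL, eqT]
    calc (2 / (p - 1)) ^ (p / 2) *
        (((p - 1) / 2) ^ (p / 2) * t ^ ((p - 2) * (p / 2)) * (t - r) ^ p) *
        t ^ (p * ((2 - p) / 2))
        = ((2 / (p - 1)) ^ (p / 2) * ((p - 1) / 2) ^ (p / 2)) *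
          (t ^ ((p - 2) * (p / 2)) * t ^ (p * ((2 - p) / 2))) * (t - r) ^ p := by ring
      _ = (t - r) ^ p := by rw [eqC, eqE]; ring
  rw [abs_of_pos hsub, ← main_eq]
  apply mul_le_mul (mul_le_mul_of_nonneg_left hDp hC.le) hSp
    (Real.rpow_nonneg (Real.rpow_nonneg ht.le _) _)
    (mul_nonneg hC.le (Real.rpow_nonneg hD0 _))

private lemma stmt4_aux2 (p : ℝ) (hp1 : 1 < p) (hp2 : p < 2) (t r : ℝ) (hr : r < t) :
    |t - r| ^ p ≤ (2 / (p - 1)) ^ (p / 2) *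
      ((|t| ^ (p - 2) * t - |r| ^ (p - 2) * r) * (t - r)) ^ (p / 2) *
      (|t| ^ p + |r| ^ p) ^ ((2 - p) / 2) := by
  by_cases h : |r| ≤ t
  · exact stmt4_aux p hp1 hp2 t r hr h
  · have hnl := not_le.1 h
    have key : t < -r ∧ r < 0 := by
      rcases abs_cases r with ⟨e, f⟩ | ⟨e, f⟩ <;> constructor <;> nlinarith
    have H := stmt4_aux p hp1 hp2 (-r) (-t) (by linarith) (by
      rw [abs_neg]
      exact abs_le.mpr ⟨by linarith, by linarith [key.1]⟩)
    have e1 : -r - -t = t - r := by ring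
    rw [e1, abs_neg, abs_neg] at H
    have e2 : |r| ^ (p - 2) * (-r) - |t| ^ (p - 2) * (-t) =
        |t| ^ (p - 2) * t - |r| ^ (p - 2) * r := by ring
    rw [e2, add_comm (|r| ^ p)] at H
    exact H

theorem stmt4 (p : ℝ) (hp1 : 1 < p) (hp2 : p < 2) :
    ∃ C > 0, ∀ t r : ℝ,
      |t - r| ^ p ≤ C * ((|t| ^ (p - 2) * t - |r| ^ (p - 2) * r) * (t - r)) ^ (p / 2) *
        (|t| ^ p + |r| ^ p) ^ ((2 - p) / 2) := by
  refine ⟨(2 / (p - 1)) ^ (p / 2), Real.rpow_pos_of_pos (div_pos two_pos (by linarith)) _, ?_⟩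
  intro t r
  rcases eq_or_ne t r with h | h
  · rw [h, sub_self]
    rw [abs_zero, Real.zero_rpow (ne_of_gt (by linarith : (0:ℝ) < p)), mul_zero,
      Real.zero_rpow (ne_of_gt (by linarith : (0:ℝ) < p / 2)), mul_zero, zero_mul]
  · rcases h.lt_or_gt with hlt | hlt
    · have H := stmt4_aux2 p hp1 hp2 r t hlt
      rw [abs_sub_comm r t] at H
      have e : (|r| ^ (p - 2) * r - |t| ^ (p - 2) * t) * (r - t) =
          (|t| ^ (p - 2) * t - |r| ^ (p - 2) * r) * (t - r) := by ring
      rw [e, add_comm (|r| ^ p)] at H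
      exact H
    · exact stmt4_aux2 p hp1 hp2 t r hlt
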